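/- For all integers α ≥ 3 and γ ≥ 2, there exist an integer k ≥ 3 and a clique embedding ψ from K_k to the P-graph P(α, γ×2) such that k / wed(ψ) ≥ 2 − 1/(2γ + ⌊(α−1)/2⌋). Consequently, the clique embedding power of P(α, γ×2) is at least 2 − 1/(2γ + ⌊(α−1)/2⌋). -/

import Mathlib

/-- Two vertex sets `A, B` *touch* in `H` if they intersect or there is an edge of `H`
between them. -/
def Touches {V : Type*} (H : SimpleGraph V) (A B : Set V) : Prop :=
  (A ∩ B).Nonempty ∨ ∃ a ∈ A, ∃ b ∈ B, H.Adj a b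

/-- A *clique embedding* from `K_k` to `H`: every vertex `u` of `K_k` is assigned a
nonempty subset `ψ u` of vertices of `H` inducing a connected subgraph, and any two
assigned subsets touch. -/
structure IsCliqueEmbedding {V : Type*} (H : SimpleGraph V) (k : ℕ)
    (ψ : Fin k → Set V) : Prop where
  nonempty : ∀ u, (ψ u).Nonempty
  connected : ∀ u, (H.induce (ψ u)).Connected
  touches : ∀ u v, Touches H (ψ u) (ψ v)

/-- The *weak depth* of an edge `{a,b}`: the number of `u` with `ψ u ∩ {a,b} ≠ ∅`. -/
noncomputable def weakDepth {V : Type*} (k : ℕ) (ψ : Fin k → Set V) (a b : V) : ℕ :=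
  Nat.card {u : Fin k // a ∈ ψ u ∨ b ∈ ψ u}

/-- The *weak edge depth* `wed(ψ)`: the maximum weak depth over all edges of `H`. -/
noncomputable def wed {V : Type*} (H : SimpleGraph V) (k : ℕ) (ψ : Fin k → Set V) : ℕ :=
  sSup {d : ℕ | ∃ a b : V, H.Adj a b ∧ d = weakDepth k ψ a b}

/-- The *clique embedding power* `clemb(H) = sup_{k ≥ 3, ψ} k / wed(ψ)`. -/
noncomputable def clemb {V : Type*} (H : SimpleGraph V) : ℝ :=
  sSup {x : ℝ | ∃ (k : ℕ) (ψ : Fin k → Set V), 3 ≤ k ∧ IsCliqueEmbedding H k ψ ∧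
    x = (k : ℝ) / (wed H k ψ : ℝ)}

/-- Vertices of the P-graph `P(ℓ₀, …, ℓ_{k-1})`: a source `s`, a sink `t`, and, for each
path `i` of length `ℓ i`, internal vertices `inner i j` for `j = 0, …, ℓ i - 2`. -/
inductive PVert (k : ℕ) (ℓ : Fin k → ℕ) : Type where
  | s : PVert k ℓ
  | t : PVert k ℓ
  | inner (i : Fin k) (j : Fin (ℓ i - 1)) : PVert k ℓ

/-- Base adjacency relation of the P-graph. -/
def pRel (k : ℕ) (ℓ : Fin k → ℕ) : PVert k ℓ → PVert k ℓ → Prop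
  | PVert.s, PVert.t => ∃ i, ℓ i = 1
  | PVert.s, PVert.inner _ j => (j : ℕ) = 0
  | PVert.inner i j, PVert.t => (j : ℕ) + 2 = ℓ i
  | PVert.inner i j, PVert.inner i' j' => i = i' ∧ (j : ℕ) + 1 = (j' : ℕ)
  | _, _ => False

/-- The P-graph `P(ℓ₀, …, ℓ_{k-1})`: paths of lengths `ℓ₀, …, ℓ_{k-1}` with all start
vertices identified into `s` and all end vertices identified into `t`. -/
def PGraph (k : ℕ) (ℓ : Fin k → ℕ) : SimpleGraph (PVert k ℓ) :=
  SimpleGraph.fromRel (pRel k ℓ)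

/-- Path lengths of the P-graph `P(α, γ×2)`: one path of length `α` and `γ` paths of
length `2`. -/
def pa2ℓ (α γ : ℕ) : Fin (1 + γ) → ℕ :=
  fun i => if (i : ℕ) = 0 then α else 2

/-- The P-graph `P(α, γ×2)`. -/
def PA2 (α γ : ℕ) : SimpleGraph (PVert (1 + γ) (pa2ℓ α γ)) :=
  PGraph (1 + γ) (pa2ℓ α γ)

namespace Stmt6

abbrev V (α γ : ℕ) := PVert (1 + γ) (pa2ℓ α γ)

def wV (α γ : ℕ) (j : ℕ) : V α γ :=
  if h : j < α - 1 then PVert.inner ⟨0, by omega⟩ ⟨j, by simpa [pa2ℓ] using h⟩ else PVert.s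

def bV (α γ : ℕ) (i : ℕ) : V α γ :=
  if h : i < γ then PVert.inner ⟨i + 1, by omega⟩ ⟨0, by simp [pa2ℓ]⟩ else PVert.s

lemma inner_ext {α γ : ℕ} {i i' : Fin (1 + γ)} (h : i = i')
    {j : Fin (pa2ℓ α γ i - 1)} {j' : Fin (pa2ℓ α γ i' - 1)} (hv : (j : ℕ) = (j' : ℕ)) :
    PVert.inner i j = PVert.inner i' j' := by
  subst h; congr 1; exact Fin.ext hv

lemma inner_eq_wV {α γ : ℕ} (i : Fin (1 + γ)) (hi : (i : ℕ) = 0)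
    (j : Fin (pa2ℓ α γ i - 1)) :
    (j : ℕ) < α - 1 ∧ PVert.inner i j = wV α γ (j : ℕ) := by
  have hj : (j : ℕ) < α - 1 := by
    have := j.isLt
    simp [pa2ℓ, hi] at this
    exact this
  refine ⟨hj, ?_⟩
  rw [wV, dif_pos hj]
  exact inner_ext (Fin.ext (by simp [hi])) rfl

lemma inner_eq_bV {α γ : ℕ} (i : Fin (1 + γ)) (hi : (i : ℕ) ≠ 0)
    (j : Fin (pa2ℓ α γ i - 1)) :
    (i : ℕ) - 1 < γ ∧ (j : ℕ) = 0 ∧ PVert.inner i j = bV α γ ((i : ℕ) - 1) := by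
  have hiγ : (i : ℕ) - 1 < γ := by have := i.isLt; omega
  have hj : (j : ℕ) = 0 := by
    have := j.isLt
    simp [pa2ℓ, hi] at this
    omega
  refine ⟨hiγ, hj, ?_⟩
  rw [bV, dif_pos hiγ]
  exact inner_ext (Fin.ext (by simp; omega)) hj

lemma wV_eq_inner {α γ : ℕ} {j : ℕ} (hj : j < α - 1) :
    wV α γ j = PVert.inner ⟨0, by omega⟩ ⟨j, by simpa [pa2ℓ] using hj⟩ := by
  rw [wV, dif_pos hj]

lemma bV_eq_inner {α γ : ℕ} {i : ℕ} (hi : i < γ) :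
    bV α γ i = PVert.inner ⟨i + 1, by omega⟩ ⟨0, by simp [pa2ℓ]⟩ := by
  rw [bV, dif_pos hi]

lemma adj_iff {α γ : ℕ} (a b : V α γ) :
    (PA2 α γ).Adj a b ↔ a ≠ b ∧ (pRel _ _ a b ∨ pRel _ _ b a) :=
  SimpleGraph.fromRel_adj _ a b

lemma adj_s_w0 {α γ : ℕ} (hα : 3 ≤ α) : (PA2 α γ).Adj PVert.s (wV α γ 0) := by
  rw [wV_eq_inner (by omega), adj_iff]
  exact ⟨by simp, Or.inl rfl⟩

lemma adj_w_succ {α γ : ℕ} {j : ℕ} (hj : j + 1 < α - 1) :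
    (PA2 α γ).Adj (wV α γ j) (wV α γ (j + 1)) := by
  rw [wV_eq_inner (by omega), wV_eq_inner hj, adj_iff]
  refine ⟨by simp [Fin.ext_iff], Or.inl ⟨rfl, rfl⟩⟩

lemma adj_w_last {α γ : ℕ} (hα : 3 ≤ α) : (PA2 α γ).Adj (wV α γ (α - 2)) PVert.t := by
  rw [wV_eq_inner (by omega), adj_iff]
  refine ⟨by simp, Or.inl ?_⟩
  show α - 2 + 2 = pa2ℓ α γ _
  simp [pa2ℓ]; omega

lemma adj_s_b {α γ : ℕ} {i : ℕ} (hi : i < γ) : (PA2 α γ).Adj PVert.s (bV α γ i) := by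
  rw [bV_eq_inner hi, adj_iff]
  exact ⟨by simp, Or.inl rfl⟩

lemma adj_b_t {α γ : ℕ} {i : ℕ} (hi : i < γ) : (PA2 α γ).Adj (bV α γ i) PVert.t := by
  rw [bV_eq_inner hi, adj_iff]
  refine ⟨by simp, Or.inl ?_⟩
  show 0 + 2 = pa2ℓ α γ _
  simp [pa2ℓ]

end Stmt6
namespace Stmt6

def LbSet (α γ h i : ℕ) : Set (V α γ) := fun x =>
  match x with
  | PVert.s => True
  | PVert.t => False
  | PVert.inner i' j => (i' : ℕ) = i + 1 ∨ ((i' : ℕ) = 0 ∧ (j : ℕ) + 2 ≤ h)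

def RbSet (α γ h i : ℕ) : Set (V α γ) := fun x =>
  match x with
  | PVert.s => False
  | PVert.t => True
  | PVert.inner i' j => (i' : ℕ) = i + 1 ∨ ((i' : ℕ) = 0 ∧ h + 1 ≤ (j : ℕ))

def PSet (α γ h : ℕ) : Set (V α γ) := fun x =>
  match x with
  | PVert.s => True
  | PVert.t => False
  | PVert.inner i' j => (i' : ℕ) = 0 ∧ (j : ℕ) + 1 ≤ h

def SSet (α γ h : ℕ) : Set (V α γ) := fun x =>
  match x with
  | PVert.s => False
  | PVert.t => True
  | PVert.inner i' j => (i' : ℕ) = 0 ∧ h ≤ (j : ℕ)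

def MSet (α γ h j0 : ℕ) : Set (V α γ) := fun x =>
  match x with
  | PVert.inner i' j => (i' : ℕ) = 0 ∧ j0 ≤ (j : ℕ) ∧ (j : ℕ) ≤ j0 + h
  | _ => False

def WSet (α γ h j0 : ℕ) : Set (V α γ) := fun x =>
  match x with
  | PVert.s => True
  | PVert.t => True
  | PVert.inner i' j => (i' : ℕ) = 1 ∨ ((i' : ℕ) = 0 ∧ ((j : ℕ) + 3 + j0 ≤ h ∨ 2 * h ≤ (j : ℕ) + j0))

section Mem
variable {α γ h : ℕ}

@[simp] lemma s_mem_Lb {i : ℕ} : PVert.s ∈ LbSet α γ h i := trivial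
@[simp] lemma s_mem_Rb {i : ℕ} : PVert.s ∉ RbSet α γ h i := fun hc => hc
@[simp] lemma s_mem_P : PVert.s ∈ PSet α γ h := trivial
@[simp] lemma s_mem_S : PVert.s ∉ SSet α γ h := fun hc => hc
@[simp] lemma s_mem_M {j0 : ℕ} : PVert.s ∉ MSet α γ h j0 := fun hc => hc
@[simp] lemma s_mem_W {j0 : ℕ} : PVert.s ∈ WSet α γ h j0 := trivial
@[simp] lemma t_mem_Lb {i : ℕ} : PVert.t ∉ LbSet α γ h i := fun hc => hc
@[simp] lemma t_mem_Rb {i : ℕ} : PVert.t ∈ RbSet α γ h i := trivial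
@[simp] lemma t_mem_P : PVert.t ∉ PSet α γ h := fun hc => hc
@[simp] lemma t_mem_S : PVert.t ∈ SSet α γ h := trivial
@[simp] lemma t_mem_M {j0 : ℕ} : PVert.t ∉ MSet α γ h j0 := fun hc => hc
@[simp] lemma t_mem_W {j0 : ℕ} : PVert.t ∈ WSet α γ h j0 := trivial

lemma w_mem_Lb {l : ℕ} (hl : l < α - 1) {i : ℕ} :
    wV α γ l ∈ LbSet α γ h i ↔ l + 2 ≤ h := by
  rw [wV_eq_inner hl]; simp [LbSet, Membership.mem, Set.Mem]

lemma w_mem_Rb {l : ℕ} (hl : l < α - 1) {i : ℕ} :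
    wV α γ l ∈ RbSet α γ h i ↔ h + 1 ≤ l := by
  rw [wV_eq_inner hl]; simp [RbSet, Membership.mem, Set.Mem]

lemma w_mem_P {l : ℕ} (hl : l < α - 1) :
    wV α γ l ∈ PSet α γ h ↔ l + 1 ≤ h := by
  rw [wV_eq_inner hl]; simp [PSet, Membership.mem, Set.Mem]

lemma w_mem_S {l : ℕ} (hl : l < α - 1) :
    wV α γ l ∈ SSet α γ h ↔ h ≤ l := by
  rw [wV_eq_inner hl]; simp [SSet, Membership.mem, Set.Mem]

lemma w_mem_M {l : ℕ} (hl : l < α - 1) {j0 : ℕ} :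
    wV α γ l ∈ MSet α γ h j0 ↔ j0 ≤ l ∧ l ≤ j0 + h := by
  rw [wV_eq_inner hl]; simp [MSet, Membership.mem, Set.Mem]

lemma w_mem_W {l : ℕ} (hl : l < α - 1) {j0 : ℕ} :
    wV α γ l ∈ WSet α γ h j0 ↔ (l + 3 + j0 ≤ h ∨ 2 * h ≤ l + j0) := by
  rw [wV_eq_inner hl]; simp [WSet, Membership.mem, Set.Mem]

lemma b_mem_Lb {i' : ℕ} (hi' : i' < γ) {i : ℕ} :
    bV α γ i' ∈ LbSet α γ h i ↔ i' = i := by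
  rw [bV_eq_inner hi']; simp [LbSet, Membership.mem, Set.Mem]

lemma b_mem_Rb {i' : ℕ} (hi' : i' < γ) {i : ℕ} :
    bV α γ i' ∈ RbSet α γ h i ↔ i' = i := by
  rw [bV_eq_inner hi']; simp [RbSet, Membership.mem, Set.Mem]

lemma b_mem_P {i' : ℕ} (hi' : i' < γ) : bV α γ i' ∉ PSet α γ h := by
  rw [bV_eq_inner hi']; simp [PSet, Membership.mem, Set.Mem]

lemma b_mem_S {i' : ℕ} (hi' : i' < γ) : bV α γ i' ∉ SSet α γ h := by
  rw [bV_eq_inner hi']; simp [SSet, Membership.mem, Set.Mem]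

lemma b_mem_M {i' : ℕ} (hi' : i' < γ) {j0 : ℕ} : bV α γ i' ∉ MSet α γ h j0 := by
  rw [bV_eq_inner hi']; simp [MSet, Membership.mem, Set.Mem]

lemma b_mem_W {i' : ℕ} (hi' : i' < γ) {j0 : ℕ} :
    bV α γ i' ∈ WSet α γ h j0 ↔ i' = 0 := by
  rw [bV_eq_inner hi']; simp [WSet, Membership.mem, Set.Mem]

end Mem

end Stmt6
namespace Stmt6

def Idx (γ h : ℕ) : Type :=
  (Fin γ ⊕ Fin γ) ⊕ ((Fin γ ⊕ Fin γ) ⊕ (Fin h ⊕ Fin (h - 1)))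

instance {γ h : ℕ} : Fintype (Idx γ h) := by unfold Idx; infer_instance

def psi' (α γ h : ℕ) : Idx γ h → Set (V α γ)
  | Sum.inl (Sum.inl i) => LbSet α γ h i.val
  | Sum.inl (Sum.inr i) => RbSet α γ h i.val
  | Sum.inr (Sum.inl (Sum.inl _)) => PSet α γ h
  | Sum.inr (Sum.inl (Sum.inr _)) => SSet α γ h
  | Sum.inr (Sum.inr (Sum.inl j)) => MSet α γ h j.val
  | Sum.inr (Sum.inr (Sum.inr j)) => WSet α γ h j.val

lemma count_bound {n : ℕ} (p : Fin n → Prop) (lo B : ℕ)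
    (hp : ∀ x, p x → lo ≤ x.val ∧ x.val < lo + B) :
    Nat.card {x : Fin n // p x} ≤ B := by
  have key : Nat.card {x : Fin n // p x} ≤ Nat.card (Fin B) := by
    refine Nat.card_le_card_of_injective
      (fun x => ⟨x.1.val - lo, by have := hp x.1 x.2; omega⟩) ?_
    intro x y hxy
    have hx := hp x.1 x.2
    have hy := hp y.1 y.2
    have hval : x.1.val - lo = y.1.val - lo := congrArg Fin.val hxy
    apply Subtype.ext; apply Fin.ext
    omega
  simpa using key

lemma card_sum_subtype {A B : Type*} [Finite A] [Finite B] (p : A ⊕ B → Prop) :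
    Nat.card {x : A ⊕ B // p x} =
      Nat.card {a : A // p (Sum.inl a)} + Nat.card {b : B // p (Sum.inr b)} := by
  rw [Nat.card_congr (Equiv.subtypeSum), Nat.card_sum]

lemma card_idx {γ h : ℕ} (p : Idx γ h → Prop) :
    Nat.card {x : Idx γ h // p x} =
      Nat.card {i : Fin γ // p (Sum.inl (Sum.inl i))} +
      Nat.card {i : Fin γ // p (Sum.inl (Sum.inr i))} +
      (Nat.card {i : Fin γ // p (Sum.inr (Sum.inl (Sum.inl i)))} +
        Nat.card {i : Fin γ // p (Sum.inr (Sum.inl (Sum.inr i)))} +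
        (Nat.card {j : Fin h // p (Sum.inr (Sum.inr (Sum.inl j)))} +
          Nat.card {j : Fin (h - 1) // p (Sum.inr (Sum.inr (Sum.inr j)))})) := by
  revert p; unfold Idx; intro p
  rw [card_sum_subtype, card_sum_subtype, card_sum_subtype, card_sum_subtype, card_sum_subtype]

end Stmt6
namespace Stmt6

section Depth
variable {α γ h : ℕ}

lemma depth_s_w0 (hα : 3 ≤ α) (H3 : 1 ≤ h) :
    Nat.card {x : Idx γ h // PVert.s ∈ psi' α γ h x ∨ wV α γ 0 ∈ psi' α γ h x} ≤ 2 * γ + h := by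
  have h0 : (0:ℕ) < α - 1 := by omega
  rw [card_idx]
  have c1 : Nat.card {i : Fin γ // PVert.s ∈ psi' α γ h (Sum.inl (Sum.inl i)) ∨
      wV α γ 0 ∈ psi' α γ h (Sum.inl (Sum.inl i))} ≤ γ :=
    count_bound _ 0 γ (fun x _ => ⟨Nat.zero_le _, by have := x.isLt; omega⟩)
  have c2 : Nat.card {i : Fin γ // PVert.s ∈ psi' α γ h (Sum.inl (Sum.inr i)) ∨
      wV α γ 0 ∈ psi' α γ h (Sum.inl (Sum.inr i))} ≤ 0 :=
    count_bound _ 0 0 (fun x hx => by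
      simp only [psi'] at hx
      rcases hx with hx | hx
      · exact absurd hx s_mem_Rb
      · rw [w_mem_Rb h0] at hx; omega)
  have c3 : Nat.card {i : Fin γ // PVert.s ∈ psi' α γ h (Sum.inr (Sum.inl (Sum.inl i))) ∨
      wV α γ 0 ∈ psi' α γ h (Sum.inr (Sum.inl (Sum.inl i)))} ≤ γ :=
    count_bound _ 0 γ (fun x _ => ⟨Nat.zero_le _, by have := x.isLt; omega⟩)
  have c4 : Nat.card {i : Fin γ // PVert.s ∈ psi' α γ h (Sum.inr (Sum.inl (Sum.inr i))) ∨
      wV α γ 0 ∈ psi' α γ h (Sum.inr (Sum.inl (Sum.inr i)))} ≤ 0 :=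
    count_bound _ 0 0 (fun x hx => by
      simp only [psi'] at hx
      rcases hx with hx | hx
      · exact absurd hx s_mem_S
      · rw [w_mem_S h0] at hx; omega)
  have c5 : Nat.card {j : Fin h // PVert.s ∈ psi' α γ h (Sum.inr (Sum.inr (Sum.inl j))) ∨
      wV α γ 0 ∈ psi' α γ h (Sum.inr (Sum.inr (Sum.inl j)))} ≤ 1 :=
    count_bound _ 0 1 (fun x hx => by
      simp only [psi'] at hx
      rcases hx with hx | hx
      · exact absurd hx s_mem_M
      · rw [w_mem_M h0] at hx; omega)
  have c6 : Nat.card {j : Fin (h-1) // PVert.s ∈ psi' α γ h (Sum.inr (Sum.inr (Sum.inr j))) ∨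
      wV α γ 0 ∈ psi' α γ h (Sum.inr (Sum.inr (Sum.inr j)))} ≤ h - 1 :=
    count_bound _ 0 (h-1) (fun x _ => ⟨Nat.zero_le _, by have := x.isLt; omega⟩)
  omega

lemma depth_s_b (hα : 3 ≤ α) (H3 : 1 ≤ h) {i : ℕ} (hi : i < γ) :
    Nat.card {x : Idx γ h // PVert.s ∈ psi' α γ h x ∨ bV α γ i ∈ psi' α γ h x} ≤ 2 * γ + h := by
  rw [card_idx]
  have c1 : Nat.card {i' : Fin γ // PVert.s ∈ psi' α γ h (Sum.inl (Sum.inl i')) ∨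
      bV α γ i ∈ psi' α γ h (Sum.inl (Sum.inl i'))} ≤ γ :=
    count_bound _ 0 γ (fun x _ => ⟨Nat.zero_le _, by have := x.isLt; omega⟩)
  have c2 : Nat.card {i' : Fin γ // PVert.s ∈ psi' α γ h (Sum.inl (Sum.inr i')) ∨
      bV α γ i ∈ psi' α γ h (Sum.inl (Sum.inr i'))} ≤ 1 :=
    count_bound _ i 1 (fun x hx => by
      simp only [psi'] at hx
      rcases hx with hx | hx
      · exact absurd hx s_mem_Rb
      · rw [b_mem_Rb hi] at hx; omega)
  have c3 : Nat.card {i' : Fin γ // PVert.s ∈ psi' α γ h (Sum.inr (Sum.inl (Sum.inl i'))) ∨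
      bV α γ i ∈ psi' α γ h (Sum.inr (Sum.inl (Sum.inl i')))} ≤ γ :=
    count_bound _ 0 γ (fun x _ => ⟨Nat.zero_le _, by have := x.isLt; omega⟩)
  have c4 : Nat.card {i' : Fin γ // PVert.s ∈ psi' α γ h (Sum.inr (Sum.inl (Sum.inr i'))) ∨
      bV α γ i ∈ psi' α γ h (Sum.inr (Sum.inl (Sum.inr i')))} ≤ 0 :=
    count_bound _ 0 0 (fun x hx => by
      simp only [psi'] at hx
      rcases hx with hx | hx
      · exact absurd hx s_mem_S
      · exact absurd hx (b_mem_S hi))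
  have c5 : Nat.card {j : Fin h // PVert.s ∈ psi' α γ h (Sum.inr (Sum.inr (Sum.inl j))) ∨
      bV α γ i ∈ psi' α γ h (Sum.inr (Sum.inr (Sum.inl j)))} ≤ 0 :=
    count_bound _ 0 0 (fun x hx => by
      simp only [psi'] at hx
      rcases hx with hx | hx
      · exact absurd hx s_mem_M
      · exact absurd hx (b_mem_M hi))
  have c6 : Nat.card {j : Fin (h-1) // PVert.s ∈ psi' α γ h (Sum.inr (Sum.inr (Sum.inr j))) ∨
      bV α γ i ∈ psi' α γ h (Sum.inr (Sum.inr (Sum.inr j)))} ≤ h - 1 :=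
    count_bound _ 0 (h-1) (fun x _ => ⟨Nat.zero_le _, by have := x.isLt; omega⟩)
  omega

lemma depth_b_t (hα : 3 ≤ α) (H3 : 1 ≤ h) {i : ℕ} (hi : i < γ) :
    Nat.card {x : Idx γ h // bV α γ i ∈ psi' α γ h x ∨ PVert.t ∈ psi' α γ h x} ≤ 2 * γ + h := by
  rw [card_idx]
  have c1 : Nat.card {i' : Fin γ // bV α γ i ∈ psi' α γ h (Sum.inl (Sum.inl i')) ∨
      PVert.t ∈ psi' α γ h (Sum.inl (Sum.inl i'))} ≤ 1 :=
    count_bound _ i 1 (fun x hx => by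
      simp only [psi'] at hx
      rcases hx with hx | hx
      · rw [b_mem_Lb hi] at hx; omega
      · exact absurd hx t_mem_Lb)
  have c2 : Nat.card {i' : Fin γ // bV α γ i ∈ psi' α γ h (Sum.inl (Sum.inr i')) ∨
      PVert.t ∈ psi' α γ h (Sum.inl (Sum.inr i'))} ≤ γ :=
    count_bound _ 0 γ (fun x _ => ⟨Nat.zero_le _, by have := x.isLt; omega⟩)
  have c3 : Nat.card {i' : Fin γ // bV α γ i ∈ psi' α γ h (Sum.inr (Sum.inl (Sum.inl i'))) ∨
      PVert.t ∈ psi' α γ h (Sum.inr (Sum.inl (Sum.inl i')))} ≤ 0 :=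
    count_bound _ 0 0 (fun x hx => by
      simp only [psi'] at hx
      rcases hx with hx | hx
      · exact absurd hx (b_mem_P hi)
      · exact absurd hx t_mem_P)
  have c4 : Nat.card {i' : Fin γ // bV α γ i ∈ psi' α γ h (Sum.inr (Sum.inl (Sum.inr i'))) ∨
      PVert.t ∈ psi' α γ h (Sum.inr (Sum.inl (Sum.inr i')))} ≤ γ :=
    count_bound _ 0 γ (fun x _ => ⟨Nat.zero_le _, by have := x.isLt; omega⟩)
  have c5 : Nat.card {j : Fin h // bV α γ i ∈ psi' α γ h (Sum.inr (Sum.inr (Sum.inl j))) ∨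
      PVert.t ∈ psi' α γ h (Sum.inr (Sum.inr (Sum.inl j)))} ≤ 0 :=
    count_bound _ 0 0 (fun x hx => by
      simp only [psi'] at hx
      rcases hx with hx | hx
      · exact absurd hx (b_mem_M hi)
      · exact absurd hx t_mem_M)
  have c6 : Nat.card {j : Fin (h-1) // bV α γ i ∈ psi' α γ h (Sum.inr (Sum.inr (Sum.inr j))) ∨
      PVert.t ∈ psi' α γ h (Sum.inr (Sum.inr (Sum.inr j)))} ≤ h - 1 :=
    count_bound _ 0 (h-1) (fun x _ => ⟨Nat.zero_le _, by have := x.isLt; omega⟩)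
  omega

lemma depth_w_t (hα : 3 ≤ α) (H1 : 2*h ≤ α - 1) (H2 : α - 1 ≤ 2*h + 1) (H3 : 1 ≤ h) :
    Nat.card {x : Idx γ h // wV α γ (α-2) ∈ psi' α γ h x ∨ PVert.t ∈ psi' α γ h x} ≤ 2 * γ + h := by
  have hl : α - 2 < α - 1 := by omega
  rw [card_idx]
  have c1 : Nat.card {i' : Fin γ // wV α γ (α-2) ∈ psi' α γ h (Sum.inl (Sum.inl i')) ∨
      PVert.t ∈ psi' α γ h (Sum.inl (Sum.inl i'))} ≤ 0 :=
    count_bound _ 0 0 (fun x hx => by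
      simp only [psi'] at hx
      rcases hx with hx | hx
      · rw [w_mem_Lb hl] at hx; omega
      · exact absurd hx t_mem_Lb)
  have c2 : Nat.card {i' : Fin γ // wV α γ (α-2) ∈ psi' α γ h (Sum.inl (Sum.inr i')) ∨
      PVert.t ∈ psi' α γ h (Sum.inl (Sum.inr i'))} ≤ γ :=
    count_bound _ 0 γ (fun x _ => ⟨Nat.zero_le _, by have := x.isLt; omega⟩)
  have c3 : Nat.card {i' : Fin γ // wV α γ (α-2) ∈ psi' α γ h (Sum.inr (Sum.inl (Sum.inl i'))) ∨
      PVert.t ∈ psi' α γ h (Sum.inr (Sum.inl (Sum.inl i')))} ≤ 0 :=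
    count_bound _ 0 0 (fun x hx => by
      simp only [psi'] at hx
      rcases hx with hx | hx
      · rw [w_mem_P hl] at hx; omega
      · exact absurd hx t_mem_P)
  have c4 : Nat.card {i' : Fin γ // wV α γ (α-2) ∈ psi' α γ h (Sum.inr (Sum.inl (Sum.inr i'))) ∨
      PVert.t ∈ psi' α γ h (Sum.inr (Sum.inl (Sum.inr i')))} ≤ γ :=
    count_bound _ 0 γ (fun x _ => ⟨Nat.zero_le _, by have := x.isLt; omega⟩)
  have c5 : Nat.card {j : Fin h // wV α γ (α-2) ∈ psi' α γ h (Sum.inr (Sum.inr (Sum.inl j))) ∨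
      PVert.t ∈ psi' α γ h (Sum.inr (Sum.inr (Sum.inl j)))} ≤ 1 :=
    count_bound _ (α-2-h) 1 (fun x hx => by
      simp only [psi'] at hx
      have := x.isLt
      rcases hx with hx | hx
      · rw [w_mem_M hl] at hx; omega
      · exact absurd hx t_mem_M)
  have c6 : Nat.card {j : Fin (h-1) // wV α γ (α-2) ∈ psi' α γ h (Sum.inr (Sum.inr (Sum.inr j))) ∨
      PVert.t ∈ psi' α γ h (Sum.inr (Sum.inr (Sum.inr j)))} ≤ h - 1 :=
    count_bound _ 0 (h-1) (fun x _ => ⟨Nat.zero_le _, by have := x.isLt; omega⟩)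
  omega

lemma depth_w_w (hα : 3 ≤ α) (H1 : 2*h ≤ α - 1) (H2 : α - 1 ≤ 2*h + 1) (H3 : 1 ≤ h)
    {j : ℕ} (hj : j + 1 < α - 1) :
    Nat.card {x : Idx γ h // wV α γ j ∈ psi' α γ h x ∨ wV α γ (j+1) ∈ psi' α γ h x} ≤ 2 * γ + h := by
  have hj0 : j < α - 1 := by omega
  rw [card_idx]
  by_cases hA : j + 2 ≤ h
  · have c1 : Nat.card {i' : Fin γ // wV α γ j ∈ psi' α γ h (Sum.inl (Sum.inl i')) ∨
        wV α γ (j+1) ∈ psi' α γ h (Sum.inl (Sum.inl i'))} ≤ γ :=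
      count_bound _ 0 γ (fun x _ => ⟨Nat.zero_le _, by have := x.isLt; omega⟩)
    have c2 : Nat.card {i' : Fin γ // wV α γ j ∈ psi' α γ h (Sum.inl (Sum.inr i')) ∨
        wV α γ (j+1) ∈ psi' α γ h (Sum.inl (Sum.inr i'))} ≤ 0 :=
      count_bound _ 0 0 (fun x hx => by
        simp only [psi', w_mem_Rb hj0, w_mem_Rb hj] at hx; omega)
    have c3 : Nat.card {i' : Fin γ // wV α γ j ∈ psi' α γ h (Sum.inr (Sum.inl (Sum.inl i'))) ∨
        wV α γ (j+1) ∈ psi' α γ h (Sum.inr (Sum.inl (Sum.inl i')))} ≤ γ :=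
      count_bound _ 0 γ (fun x _ => ⟨Nat.zero_le _, by have := x.isLt; omega⟩)
    have c4 : Nat.card {i' : Fin γ // wV α γ j ∈ psi' α γ h (Sum.inr (Sum.inl (Sum.inr i'))) ∨
        wV α γ (j+1) ∈ psi' α γ h (Sum.inr (Sum.inl (Sum.inr i')))} ≤ 0 :=
      count_bound _ 0 0 (fun x hx => by
        simp only [psi', w_mem_S hj0, w_mem_S hj] at hx; omega)
    have c5 : Nat.card {j' : Fin h // wV α γ j ∈ psi' α γ h (Sum.inr (Sum.inr (Sum.inl j'))) ∨
        wV α γ (j+1) ∈ psi' α γ h (Sum.inr (Sum.inr (Sum.inl j')))} ≤ j + 2 :=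
      count_bound _ 0 (j+2) (fun x hx => by
        simp only [psi', w_mem_M hj0, w_mem_M hj] at hx; omega)
    have c6 : Nat.card {j' : Fin (h-1) // wV α γ j ∈ psi' α γ h (Sum.inr (Sum.inr (Sum.inr j'))) ∨
        wV α γ (j+1) ∈ psi' α γ h (Sum.inr (Sum.inr (Sum.inr j')))} ≤ h - 2 - j :=
      count_bound _ 0 (h-2-j) (fun x hx => by
        simp only [psi', w_mem_W hj0, w_mem_W hj] at hx
        have := x.isLt; omega)
    omega
  · by_cases hB : j + 1 ≤ h
    · have c1 : Nat.card {i' : Fin γ // wV α γ j ∈ psi' α γ h (Sum.inl (Sum.inl i')) ∨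
          wV α γ (j+1) ∈ psi' α γ h (Sum.inl (Sum.inl i'))} ≤ 0 :=
        count_bound _ 0 0 (fun x hx => by
          simp only [psi', w_mem_Lb hj0, w_mem_Lb hj] at hx; omega)
      have c2 : Nat.card {i' : Fin γ // wV α γ j ∈ psi' α γ h (Sum.inl (Sum.inr i')) ∨
          wV α γ (j+1) ∈ psi' α γ h (Sum.inl (Sum.inr i'))} ≤ 0 :=
        count_bound _ 0 0 (fun x hx => by
          simp only [psi', w_mem_Rb hj0, w_mem_Rb hj] at hx; omega)
      have c3 : Nat.card {i' : Fin γ // wV α γ j ∈ psi' α γ h (Sum.inr (Sum.inl (Sum.inl i'))) ∨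
          wV α γ (j+1) ∈ psi' α γ h (Sum.inr (Sum.inl (Sum.inl i')))} ≤ γ :=
        count_bound _ 0 γ (fun x _ => ⟨Nat.zero_le _, by have := x.isLt; omega⟩)
      have c4 : Nat.card {i' : Fin γ // wV α γ j ∈ psi' α γ h (Sum.inr (Sum.inl (Sum.inr i'))) ∨
          wV α γ (j+1) ∈ psi' α γ h (Sum.inr (Sum.inl (Sum.inr i')))} ≤ γ :=
        count_bound _ 0 γ (fun x _ => ⟨Nat.zero_le _, by have := x.isLt; omega⟩)
      have c5 : Nat.card {j' : Fin h // wV α γ j ∈ psi' α γ h (Sum.inr (Sum.inr (Sum.inl j'))) ∨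
          wV α γ (j+1) ∈ psi' α γ h (Sum.inr (Sum.inr (Sum.inl j')))} ≤ h :=
        count_bound _ 0 h (fun x _ => ⟨Nat.zero_le _, by have := x.isLt; omega⟩)
      have c6 : Nat.card {j' : Fin (h-1) // wV α γ j ∈ psi' α γ h (Sum.inr (Sum.inr (Sum.inr j'))) ∨
          wV α γ (j+1) ∈ psi' α γ h (Sum.inr (Sum.inr (Sum.inr j')))} ≤ 0 :=
        count_bound _ 0 0 (fun x hx => by
          simp only [psi', w_mem_W hj0, w_mem_W hj] at hx
          have := x.isLt; omega)
      omega
    · have hC : h ≤ j := by omega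
      have hj2h : j ≤ 2*h - 1 := by omega
      have c1 : Nat.card {i' : Fin γ // wV α γ j ∈ psi' α γ h (Sum.inl (Sum.inl i')) ∨
          wV α γ (j+1) ∈ psi' α γ h (Sum.inl (Sum.inl i'))} ≤ 0 :=
        count_bound _ 0 0 (fun x hx => by
          simp only [psi', w_mem_Lb hj0, w_mem_Lb hj] at hx; omega)
      have c2 : Nat.card {i' : Fin γ // wV α γ j ∈ psi' α γ h (Sum.inl (Sum.inr i')) ∨
          wV α γ (j+1) ∈ psi' α γ h (Sum.inl (Sum.inr i'))} ≤ γ :=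
        count_bound _ 0 γ (fun x _ => ⟨Nat.zero_le _, by have := x.isLt; omega⟩)
      have c3 : Nat.card {i' : Fin γ // wV α γ j ∈ psi' α γ h (Sum.inr (Sum.inl (Sum.inl i'))) ∨
          wV α γ (j+1) ∈ psi' α γ h (Sum.inr (Sum.inl (Sum.inl i')))} ≤ 0 :=
        count_bound _ 0 0 (fun x hx => by
          simp only [psi', w_mem_P hj0, w_mem_P hj] at hx; omega)
      have c4 : Nat.card {i' : Fin γ // wV α γ j ∈ psi' α γ h (Sum.inr (Sum.inl (Sum.inr i'))) ∨
          wV α γ (j+1) ∈ psi' α γ h (Sum.inr (Sum.inl (Sum.inr i')))} ≤ γ :=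
        count_bound _ 0 γ (fun x _ => ⟨Nat.zero_le _, by have := x.isLt; omega⟩)
      have c5 : Nat.card {j' : Fin h // wV α γ j ∈ psi' α γ h (Sum.inr (Sum.inr (Sum.inl j'))) ∨
          wV α γ (j+1) ∈ psi' α γ h (Sum.inr (Sum.inr (Sum.inl j')))} ≤ 2*h - j :=
        count_bound _ (j - h) (2*h - j) (fun x hx => by
          simp only [psi', w_mem_M hj0, w_mem_M hj] at hx
          have := x.isLt; omega)
      have c6 : Nat.card {j' : Fin (h-1) // wV α γ j ∈ psi' α γ h (Sum.inr (Sum.inr (Sum.inr j'))) ∨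
          wV α γ (j+1) ∈ psi' α γ h (Sum.inr (Sum.inr (Sum.inr j')))} ≤ j - h :=
        count_bound _ (2*h - 1 - j) (j - h) (fun x hx => by
          simp only [psi', w_mem_W hj0, w_mem_W hj] at hx
          have := x.isLt; omega)
      omega

end Depth
end Stmt6
namespace Stmt6

section Conn
variable {α γ h : ℕ}

lemma ind_adj {S : Set (V α γ)} {x y : V α γ} (hx : x ∈ S) (hy : y ∈ S)
    (hxy : (PA2 α γ).Adj x y) : ((PA2 α γ).induce S).Adj ⟨x, hx⟩ ⟨y, hy⟩ := hxy

lemma reach_congr {S : Set (V α γ)} {x y c : V α γ} {hc : c ∈ S} (hxy : x = y)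
    (hx : x ∈ S) (hy : y ∈ S)
    (hr : ((PA2 α γ).induce S).Reachable ⟨y, hy⟩ ⟨c, hc⟩) :
    ((PA2 α γ).induce S).Reachable ⟨x, hx⟩ ⟨c, hc⟩ := by subst hxy; exact hr

lemma reach_chain (S : Set (V α γ)) (a : ℕ) :
    ∀ b, (hab : a ≤ b) → (hb : b < α - 1) → (hall : ∀ l, a ≤ l → l ≤ b → wV α γ l ∈ S) →
    ((PA2 α γ).induce S).Reachable ⟨wV α γ b, hall b hab le_rfl⟩
      ⟨wV α γ a, hall a le_rfl hab⟩ := by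
  intro b hab
  induction b, hab using Nat.le_induction with
  | base => intro _ _; exact SimpleGraph.Reachable.refl _
  | succ n hn ih =>
    intro hb hall
    have hn1 : n < α - 1 := by omega
    have step : ((PA2 α γ).induce S).Adj
        ⟨wV α γ n, hall n hn (by omega)⟩ ⟨wV α γ (n+1), hall (n+1) (by omega) le_rfl⟩ :=
      ind_adj _ _ (adj_w_succ hb)
    exact step.symm.reachable.trans (ih hn1 (fun l hl hl' => hall l hl (by omega)))

lemma connected_anchor (S : Set (V α γ)) (c : V α γ) (hc : c ∈ S)
    (hreach : ∀ x (hx : x ∈ S), ((PA2 α γ).induce S).Reachable ⟨x, hx⟩ ⟨c, hc⟩) :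
    ((PA2 α γ).induce S).Connected := by
  rw [SimpleGraph.connected_iff]
  exact ⟨fun u v => (hreach u.1 u.2).trans (hreach v.1 v.2).symm, ⟨⟨c, hc⟩⟩⟩

lemma lb_connected (hα : 3 ≤ α) {i : ℕ} (hi : i < γ) (H1 : 2*h ≤ α - 1) :
    ((PA2 α γ).induce (LbSet α γ h i)).Connected := by
  apply connected_anchor _ PVert.s s_mem_Lb
  intro x hx
  match x with
  | PVert.s => exact SimpleGraph.Reachable.refl _
  | PVert.t => exact absurd hx t_mem_Lb
  | PVert.inner i' j =>
    by_cases hiz : (i' : ℕ) = 0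
    · obtain ⟨hjlt, heq⟩ := inner_eq_wV i' hiz j
      refine reach_congr heq hx (heq ▸ hx) ?_
      have hmem : wV α γ (j : ℕ) ∈ LbSet α γ h i := heq ▸ hx
      have hcond : (j : ℕ) + 2 ≤ h := (w_mem_Lb hjlt).mp hmem
      have hall : ∀ l, 0 ≤ l → l ≤ (j : ℕ) → wV α γ l ∈ LbSet α γ h i := fun l _ hl =>
        (w_mem_Lb (by omega)).mpr (by omega)
      have chain := reach_chain (LbSet α γ h i) 0 (j : ℕ) (Nat.zero_le _) hjlt hall
      refine chain.trans ?_
      exact (ind_adj s_mem_Lb (hall 0 le_rfl (Nat.zero_le _)) (adj_s_w0 hα)).reachable.symm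
    · obtain ⟨hiγ, hjz, heq⟩ := inner_eq_bV i' hiz j
      refine reach_congr heq hx (heq ▸ hx) ?_
      have hmem : bV α γ ((i' : ℕ) - 1) ∈ LbSet α γ h i := heq ▸ hx
      exact (ind_adj s_mem_Lb hmem (adj_s_b hiγ)).symm.reachable

lemma p_connected (hα : 3 ≤ α) (H1 : 2*h ≤ α - 1) :
    ((PA2 α γ).induce (PSet α γ h)).Connected := by
  apply connected_anchor _ PVert.s s_mem_P
  intro x hx
  match x with
  | PVert.s => exact SimpleGraph.Reachable.refl _
  | PVert.t => exact absurd hx t_mem_P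
  | PVert.inner i' j =>
    by_cases hiz : (i' : ℕ) = 0
    · obtain ⟨hjlt, heq⟩ := inner_eq_wV i' hiz j
      refine reach_congr heq hx (heq ▸ hx) ?_
      have hcond : (j : ℕ) + 1 ≤ h := (w_mem_P hjlt).mp (heq ▸ hx)
      have hall : ∀ l, 0 ≤ l → l ≤ (j : ℕ) → wV α γ l ∈ PSet α γ h := fun l _ hl =>
        (w_mem_P (by omega)).mpr (by omega)
      exact (reach_chain (PSet α γ h) 0 (j : ℕ) (Nat.zero_le _) hjlt hall).trans
        (ind_adj s_mem_P (hall 0 le_rfl (Nat.zero_le _)) (adj_s_w0 hα)).reachable.symm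
    · obtain ⟨hiγ, hjz, heq⟩ := inner_eq_bV i' hiz j
      exact absurd (heq ▸ hx) (b_mem_P hiγ)

lemma rb_connected (hα : 3 ≤ α) {i : ℕ} (hi : i < γ) (H1 : 2*h ≤ α - 1) :
    ((PA2 α γ).induce (RbSet α γ h i)).Connected := by
  apply connected_anchor _ PVert.t t_mem_Rb
  intro x hx
  match x with
  | PVert.s => exact absurd hx s_mem_Rb
  | PVert.t => exact SimpleGraph.Reachable.refl _
  | PVert.inner i' j =>
    by_cases hiz : (i' : ℕ) = 0
    · obtain ⟨hjlt, heq⟩ := inner_eq_wV i' hiz j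
      refine reach_congr heq hx (heq ▸ hx) ?_
      have hcond : h + 1 ≤ (j : ℕ) := (w_mem_Rb hjlt).mp (heq ▸ hx)
      have hall : ∀ l, (j : ℕ) ≤ l → l ≤ α - 2 → wV α γ l ∈ RbSet α γ h i := fun l hl hl' =>
        (w_mem_Rb (by omega)).mpr (by omega)
      have chain := (reach_chain (RbSet α γ h i) (j : ℕ) (α - 2) (by omega) (by omega) hall).symm
      refine chain.trans ?_
      exact (ind_adj (hall (α-2) (by omega) le_rfl) t_mem_Rb (adj_w_last hα)).reachable
    · obtain ⟨hiγ, hjz, heq⟩ := inner_eq_bV i' hiz j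
      refine reach_congr heq hx (heq ▸ hx) ?_
      exact (ind_adj (heq ▸ hx) t_mem_Rb (adj_b_t hiγ)).reachable

lemma s_connected (hα : 3 ≤ α) (H1 : 2*h ≤ α - 1) (H3 : 1 ≤ h) :
    ((PA2 α γ).induce (SSet α γ h)).Connected := by
  apply connected_anchor _ PVert.t t_mem_S
  intro x hx
  match x with
  | PVert.s => exact absurd hx s_mem_S
  | PVert.t => exact SimpleGraph.Reachable.refl _
  | PVert.inner i' j =>
    by_cases hiz : (i' : ℕ) = 0
    · obtain ⟨hjlt, heq⟩ := inner_eq_wV i' hiz j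
      refine reach_congr heq hx (heq ▸ hx) ?_
      have hcond : h ≤ (j : ℕ) := (w_mem_S hjlt).mp (heq ▸ hx)
      have hall : ∀ l, (j : ℕ) ≤ l → l ≤ α - 2 → wV α γ l ∈ SSet α γ h := fun l hl hl' =>
        (w_mem_S (by omega)).mpr (by omega)
      exact ((reach_chain (SSet α γ h) (j : ℕ) (α - 2) (by omega) (by omega) hall).symm).trans
        (ind_adj (hall (α-2) (by omega) le_rfl) t_mem_S (adj_w_last hα)).reachable
    · obtain ⟨hiγ, hjz, heq⟩ := inner_eq_bV i' hiz j
      exact absurd (heq ▸ hx) (b_mem_S hiγ)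

lemma m_connected (hα : 3 ≤ α) {j0 : ℕ} (hj0 : j0 < h) (H1 : 2*h ≤ α - 1) :
    ((PA2 α γ).induce (MSet α γ h j0)).Connected := by
  have hj0lt : j0 < α - 1 := by omega
  have hanchor : wV α γ j0 ∈ MSet α γ h j0 := (w_mem_M hj0lt).mpr ⟨le_rfl, by omega⟩
  apply connected_anchor _ (wV α γ j0) hanchor
  intro x hx
  match x with
  | PVert.s => exact absurd hx s_mem_M
  | PVert.t => exact absurd hx t_mem_M
  | PVert.inner i' j =>
    by_cases hiz : (i' : ℕ) = 0
    · obtain ⟨hjlt, heq⟩ := inner_eq_wV i' hiz j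
      refine reach_congr heq hx (heq ▸ hx) ?_
      have hcond := (w_mem_M hjlt).mp (heq ▸ hx)
      have hall : ∀ l, j0 ≤ l → l ≤ (j : ℕ) → wV α γ l ∈ MSet α γ h j0 := fun l hl hl' =>
        (w_mem_M (by omega)).mpr (by omega)
      exact reach_chain (MSet α γ h j0) j0 (j : ℕ) (by omega) hjlt hall
    · obtain ⟨hiγ, hjz, heq⟩ := inner_eq_bV i' hiz j
      exact absurd (heq ▸ hx) (b_mem_M hiγ)

lemma w_connected (hα : 3 ≤ α) (hγ : 2 ≤ γ) {j0 : ℕ} (hj0 : j0 < h - 1)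
    (H1 : 2*h ≤ α - 1) :
    ((PA2 α γ).induce (WSet α γ h j0)).Connected := by
  have hb0 : bV α γ 0 ∈ WSet α γ h j0 := (b_mem_W (by omega)).mpr rfl
  have hreach_s : ((PA2 α γ).induce (WSet α γ h j0)).Reachable
      ⟨PVert.s, s_mem_W⟩ ⟨PVert.t, t_mem_W⟩ :=
    (ind_adj s_mem_W hb0 (adj_s_b (by omega))).reachable.trans
      (ind_adj hb0 t_mem_W (adj_b_t (by omega))).reachable
  apply connected_anchor _ PVert.t t_mem_W
  intro x hx
  match x with
  | PVert.s => exact hreach_s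
  | PVert.t => exact SimpleGraph.Reachable.refl _
  | PVert.inner i' j =>
    by_cases hiz : (i' : ℕ) = 0
    · obtain ⟨hjlt, heq⟩ := inner_eq_wV i' hiz j
      refine reach_congr heq hx (heq ▸ hx) ?_
      have hcond := (w_mem_W hjlt).mp (heq ▸ hx)
      rcases hcond with hL | hR
      · have hall : ∀ l, 0 ≤ l → l ≤ (j : ℕ) → wV α γ l ∈ WSet α γ h j0 := fun l _ hl =>
          (w_mem_W (by omega)).mpr (Or.inl (by omega))
        refine (reach_chain (WSet α γ h j0) 0 (j : ℕ) (Nat.zero_le _) hjlt hall).trans ?_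
        refine ((ind_adj s_mem_W (hall 0 le_rfl (Nat.zero_le _)) (adj_s_w0 hα)).symm.reachable).trans
          hreach_s
      · have hall : ∀ l, (j : ℕ) ≤ l → l ≤ α - 2 → wV α γ l ∈ WSet α γ h j0 := fun l hl hl' =>
          (w_mem_W (by omega)).mpr (Or.inr (by omega))
        exact ((reach_chain (WSet α γ h j0) (j : ℕ) (α - 2) (by omega) (by omega) hall).symm).trans
          (ind_adj (hall (α-2) (by omega) le_rfl) t_mem_W (adj_w_last hα)).reachable
    · obtain ⟨hiγ, hjz, heq⟩ := inner_eq_bV i' hiz j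
      refine reach_congr heq hx (heq ▸ hx) ?_
      exact (ind_adj (heq ▸ hx) t_mem_W (adj_b_t hiγ)).reachable

end Conn
end Stmt6
namespace Stmt6

section Touch
variable {α γ h : ℕ}

lemma touches_of_mem {A B : Set (V α γ)} {x : V α γ} (hA : x ∈ A) (hB : x ∈ B) :
    Touches (PA2 α γ) A B := Or.inl ⟨x, hA, hB⟩

lemma touches_of_adj {A B : Set (V α γ)} {x y : V α γ} (hA : x ∈ A) (hB : y ∈ B)
    (hxy : (PA2 α γ).Adj x y) : Touches (PA2 α γ) A B := Or.inr ⟨x, hA, y, hB, hxy⟩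

lemma touches_symm {A B : Set (V α γ)} (hAB : Touches (PA2 α γ) A B) :
    Touches (PA2 α γ) B A := by
  rcases hAB with ⟨x, hx, hx'⟩ | ⟨x, hx, y, hy, hxy⟩
  · exact Or.inl ⟨x, hx', hx⟩
  · exact Or.inr ⟨y, hy, x, hx, hxy.symm⟩

variable (hα : 3 ≤ α) (hγ : 2 ≤ γ) (H1 : 2*h ≤ α - 1) (H3 : 1 ≤ h)

include hα H1 H3 in
lemma touch_LbM {i j0 : ℕ} (hi : i < γ) (hj0 : j0 < h) :
    Touches (PA2 α γ) (LbSet α γ h i) (MSet α γ h j0) := by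
  have hj0lt : j0 < α - 1 := by omega
  rcases Nat.eq_zero_or_pos j0 with rfl | hpos
  · exact touches_of_adj s_mem_Lb ((w_mem_M (by omega)).mpr ⟨le_rfl, by omega⟩) (adj_s_w0 hα)
  · by_cases hc : j0 + 2 ≤ h
    · exact touches_of_mem ((w_mem_Lb hj0lt).mpr hc) ((w_mem_M hj0lt).mpr ⟨le_rfl, by omega⟩)
    · have hadj := adj_w_succ (α := α) (γ := γ) (j := j0 - 1) (by omega)
      rw [show j0 - 1 + 1 = j0 from by omega] at hadj
      exact touches_of_adj ((w_mem_Lb (by omega)).mpr (by omega))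
        ((w_mem_M hj0lt).mpr ⟨le_rfl, by omega⟩) hadj

include hα H1 H3 in
lemma touch_RbM {i j0 : ℕ} (hi : i < γ) (hj0 : j0 < h) :
    Touches (PA2 α γ) (RbSet α γ h i) (MSet α γ h j0) := by
  rcases Nat.eq_zero_or_pos j0 with rfl | hpos
  · by_cases hc : h + 1 ≤ α - 2
    · have hadj := adj_w_succ (α := α) (γ := γ) (j := h) (by omega)
      exact touches_symm (touches_of_adj (x := wV α γ h) (y := wV α γ (h+1))
        ((w_mem_M (by omega)).mpr ⟨by omega, by omega⟩)
        ((w_mem_Rb (by omega)).mpr (by omega)) hadj)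
    · exact touches_symm (touches_of_adj (x := wV α γ (α-2))
        ((w_mem_M (by omega)).mpr ⟨by omega, by omega⟩)
        t_mem_Rb (adj_w_last hα))
  · exact touches_of_mem (x := wV α γ (j0 + h)) ((w_mem_Rb (by omega)).mpr (by omega))
      ((w_mem_M (by omega)).mpr ⟨by omega, by omega⟩)

include hα H1 in
lemma touch_PM {j0 : ℕ} (hj0 : j0 < h) :
    Touches (PA2 α γ) (PSet α γ h) (MSet α γ h j0) :=
  touches_of_mem (x := wV α γ j0) ((w_mem_P (by omega)).mpr (by omega))
    ((w_mem_M (by omega)).mpr ⟨le_rfl, by omega⟩)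

include hα H1 H3 in
lemma touch_SM {j0 : ℕ} (hj0 : j0 < h) :
    Touches (PA2 α γ) (SSet α γ h) (MSet α γ h j0) :=
  touches_of_mem (x := wV α γ h) ((w_mem_S (by omega)).mpr (by omega))
    ((w_mem_M (by omega)).mpr ⟨by omega, by omega⟩)

include hα H1 H3 in
lemma touch_MM {j0 j1 : ℕ} (hj0 : j0 < h) (hj1 : j1 < h) :
    Touches (PA2 α γ) (MSet α γ h j0) (MSet α γ h j1) :=
  touches_of_mem (x := wV α γ (h - 1)) ((w_mem_M (by omega)).mpr ⟨by omega, by omega⟩)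
    ((w_mem_M (by omega)).mpr ⟨by omega, by omega⟩)

include hα H1 H3 in
lemma touch_MW {j0 j1 : ℕ} (hj0 : j0 < h) (hj1 : j1 < h - 1) :
    Touches (PA2 α γ) (MSet α γ h j0) (WSet α γ h j1) := by
  have hj0lt : j0 < α - 1 := by omega
  by_cases hc : j0 + j1 + 2 ≤ h
  · rcases Nat.eq_zero_or_pos j0 with rfl | hpos
    · exact touches_symm (touches_of_adj s_mem_W ((w_mem_M (by omega)).mpr ⟨le_rfl, by omega⟩)
        (adj_s_w0 hα))
    · have hadj := adj_w_succ (α := α) (γ := γ) (j := j0 - 1) (by omega)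
      rw [show j0 - 1 + 1 = j0 from by omega] at hadj
      exact touches_symm (touches_of_adj ((w_mem_W (by omega)).mpr (Or.inl (by omega)))
        ((w_mem_M hj0lt).mpr ⟨le_rfl, by omega⟩) hadj)
  · by_cases hd : 2*h - j1 ≤ α - 2
    · have hadj := adj_w_succ (α := α) (γ := γ) (j := 2*h - 1 - j1) (by omega)
      rw [show 2*h - 1 - j1 + 1 = 2*h - j1 from by omega] at hadj
      exact touches_of_adj ((w_mem_M (by omega)).mpr ⟨by omega, by omega⟩)
        ((w_mem_W (by omega)).mpr (Or.inr (by omega))) hadj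
    · exact touches_of_adj ((w_mem_M (by omega)).mpr ⟨by omega, by omega⟩) t_mem_W
        (adj_w_last hα)

include hα H1 H3 in
lemma touch_PS : Touches (PA2 α γ) (PSet α γ h) (SSet α γ h) := by
  have hadj := adj_w_succ (α := α) (γ := γ) (j := h - 1) (by omega)
  rw [show h - 1 + 1 = h from by omega] at hadj
  exact touches_of_adj ((w_mem_P (by omega)).mpr (by omega))
    ((w_mem_S (by omega)).mpr le_rfl) hadj

include hα hγ H1 H3 in
lemma psi'_touches : ∀ x y : Idx γ h, Touches (PA2 α γ) (psi' α γ h x) (psi' α γ h y) := by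
  have hbt : ∀ i : Fin γ, (PA2 α γ).Adj (bV α γ i.val) PVert.t := fun i => adj_b_t i.isLt
  have hsb : ∀ i : Fin γ, (PA2 α γ).Adj PVert.s (bV α γ i.val) := fun i => adj_s_b i.isLt
  intro x y
  rcases x with (i | i) | ((i | i) | (j | j)) <;>
    rcases y with (i' | i') | ((i' | i') | (j' | j')) <;>
    simp only [psi']
  -- Lb row
  · exact touches_of_mem s_mem_Lb s_mem_Lb
  · exact touches_of_adj ((b_mem_Lb i.isLt).mpr rfl) t_mem_Rb (hbt i)
  · exact touches_of_mem s_mem_Lb s_mem_P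
  · exact touches_of_adj ((b_mem_Lb i.isLt).mpr rfl) t_mem_S (hbt i)
  · exact touch_LbM hα H1 H3 i.isLt j'.isLt
  · exact touches_of_mem s_mem_Lb s_mem_W
  -- Rb row
  · exact touches_symm (touches_of_adj ((b_mem_Lb i'.isLt).mpr rfl) t_mem_Rb (hbt i'))
  · exact touches_of_mem t_mem_Rb t_mem_Rb
  · exact touches_symm (touches_of_adj s_mem_P ((b_mem_Rb i.isLt).mpr rfl) (hsb i))
  · exact touches_of_mem t_mem_Rb t_mem_S
  · exact touch_RbM hα H1 H3 i.isLt j'.isLt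
  · exact touches_of_mem t_mem_Rb t_mem_W
  -- P row
  · exact touches_of_mem s_mem_P s_mem_Lb
  · exact touches_of_adj s_mem_P ((b_mem_Rb i'.isLt).mpr rfl) (hsb i')
  · exact touches_of_mem s_mem_P s_mem_P
  · exact touch_PS hα H1 H3
  · exact touch_PM hα H1 j'.isLt
  · exact touches_of_mem s_mem_P s_mem_W
  -- S row
  · exact touches_symm (touches_of_adj ((b_mem_Lb i'.isLt).mpr rfl) t_mem_S (hbt i'))
  · exact touches_of_mem t_mem_S t_mem_Rb
  · exact touches_symm (touch_PS hα H1 H3)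
  · exact touches_of_mem t_mem_S t_mem_S
  · exact touch_SM hα H1 H3 j'.isLt
  · exact touches_of_mem t_mem_S t_mem_W
  -- M row
  · exact touches_symm (touch_LbM hα H1 H3 i'.isLt j.isLt)
  · exact touches_symm (touch_RbM hα H1 H3 i'.isLt j.isLt)
  · exact touches_symm (touch_PM hα H1 j.isLt)
  · exact touches_symm (touch_SM hα H1 H3 j.isLt)
  · exact touch_MM hα H1 H3 j.isLt j'.isLt
  · exact touch_MW hα H1 H3 j.isLt j'.isLt
  -- W row
  · exact touches_of_mem s_mem_W s_mem_Lb
  · exact touches_of_mem t_mem_W t_mem_Rb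
  · exact touches_of_mem s_mem_W s_mem_P
  · exact touches_of_mem t_mem_W t_mem_S
  · exact touches_symm (touch_MW hα H1 H3 j'.isLt j.isLt)
  · exact touches_of_mem s_mem_W s_mem_W

end Touch
end Stmt6
namespace Stmt6

section Dispatch
variable {α γ h : ℕ}

lemma pa2ℓ_zero {i : Fin (1 + γ)} (hi : (i : ℕ) = 0) : pa2ℓ α γ i = α := by
  simp [pa2ℓ, hi]

lemma pa2ℓ_pos {i : Fin (1 + γ)} (hi : (i : ℕ) ≠ 0) : pa2ℓ α γ i = 2 := by
  simp [pa2ℓ, hi]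

lemma no_one (hα : 3 ≤ α) (i : Fin (1 + γ)) : pa2ℓ α γ i ≠ 1 := by
  by_cases hi : (i : ℕ) = 0
  · rw [pa2ℓ_zero hi]; omega
  · rw [pa2ℓ_pos hi]; omega

lemma card_comm (a b : V α γ) :
    Nat.card {x : Idx γ h // a ∈ psi' α γ h x ∨ b ∈ psi' α γ h x} =
    Nat.card {x : Idx γ h // b ∈ psi' α γ h x ∨ a ∈ psi' α γ h x} :=
  Nat.card_congr (Equiv.subtypeEquivRight (fun _ => or_comm))

lemma card_sub {α γ h : ℕ} {a a' b b' : V α γ} (ha : a = a') (hb : b = b') :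
    Nat.card {x : Idx γ h // a ∈ psi' α γ h x ∨ b ∈ psi' α γ h x} =
    Nat.card {x : Idx γ h // a' ∈ psi' α γ h x ∨ b' ∈ psi' α γ h x} := by
  subst ha; subst hb; rfl

lemma depth_all (hα : 3 ≤ α) (H1 : 2*h ≤ α - 1) (H2 : α - 1 ≤ 2*h + 1) (H3 : 1 ≤ h)
    {a b : V α γ} (hadj : (PA2 α γ).Adj a b) :
    Nat.card {x : Idx γ h // a ∈ psi' α γ h x ∨ b ∈ psi' α γ h x} ≤ 2 * γ + h := by
  rw [adj_iff] at hadj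
  obtain ⟨hne, hr⟩ := hadj
  match a, b with
  | PVert.s, PVert.s => simp [pRel] at hr
  | PVert.s, PVert.t =>
    exfalso; simp only [pRel] at hr
    rcases hr with ⟨i, hi⟩ | hf
    · exact no_one hα i hi
    · exact hf
  | PVert.t, PVert.s =>
    exfalso; simp only [pRel] at hr
    rcases hr with hf | ⟨i, hi⟩
    · exact hf
    · exact no_one hα i hi
  | PVert.t, PVert.t => simp [pRel] at hr
  | PVert.s, PVert.inner i j =>
    have hj0 : (j : ℕ) = 0 := by
      simp only [pRel] at hr; exact hr.elim id False.elim
    by_cases hi : (i : ℕ) = 0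
    · obtain ⟨hlt, heq⟩ := inner_eq_wV i hi j
      have hw : PVert.inner i j = wV α γ 0 := heq.trans (by rw [hj0])
      refine (card_sub rfl hw).trans_le ?_
      exact depth_s_w0 hα H3
    · obtain ⟨hiγ, _, heq⟩ := inner_eq_bV i hi j
      refine (card_sub rfl heq).trans_le ?_
      exact depth_s_b hα H3 hiγ
  | PVert.inner i j, PVert.s =>
    have hj0 : (j : ℕ) = 0 := by
      simp only [pRel] at hr; exact hr.elim False.elim id
    rw [card_comm]
    by_cases hi : (i : ℕ) = 0
    · obtain ⟨hlt, heq⟩ := inner_eq_wV i hi j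
      have hw : PVert.inner i j = wV α γ 0 := heq.trans (by rw [hj0])
      refine (card_sub rfl hw).trans_le ?_
      exact depth_s_w0 hα H3
    · obtain ⟨hiγ, _, heq⟩ := inner_eq_bV i hi j
      refine (card_sub rfl heq).trans_le ?_
      exact depth_s_b hα H3 hiγ
  | PVert.inner i j, PVert.t =>
    have hj2 : (j : ℕ) + 2 = pa2ℓ α γ i := by
      simp only [pRel] at hr; exact hr.elim id False.elim
    by_cases hi : (i : ℕ) = 0
    · obtain ⟨hlt, heq⟩ := inner_eq_wV i hi j
      have hz := pa2ℓ_zero (α := α) (γ := γ) hi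
      have hja : (j : ℕ) = α - 2 := by omega
      have hw : PVert.inner i j = wV α γ (α - 2) := heq.trans (by rw [hja])
      refine (card_sub hw rfl).trans_le ?_
      exact depth_w_t hα H1 H2 H3
    · obtain ⟨hiγ, _, heq⟩ := inner_eq_bV i hi j
      refine (card_sub heq rfl).trans_le ?_
      exact depth_b_t hα H3 hiγ
  | PVert.t, PVert.inner i j =>
    have hj2 : (j : ℕ) + 2 = pa2ℓ α γ i := by
      simp only [pRel] at hr; exact hr.elim False.elim id
    rw [card_comm]
    by_cases hi : (i : ℕ) = 0
    · obtain ⟨hlt, heq⟩ := inner_eq_wV i hi j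
      have hz := pa2ℓ_zero (α := α) (γ := γ) hi
      have hja : (j : ℕ) = α - 2 := by omega
      have hw : PVert.inner i j = wV α γ (α - 2) := heq.trans (by rw [hja])
      refine (card_sub hw rfl).trans_le ?_
      exact depth_w_t hα H1 H2 H3
    · obtain ⟨hiγ, _, heq⟩ := inner_eq_bV i hi j
      refine (card_sub heq rfl).trans_le ?_
      exact depth_b_t hα H3 hiγ
  | PVert.inner i j, PVert.inner i' j' =>
    simp only [pRel] at hr
    by_cases hi : (i : ℕ) = 0
    · rcases hr with ⟨hii', hjj'⟩ | ⟨hii', hjj'⟩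
      · have hi' : (i' : ℕ) = 0 := by rw [← hii']; exact hi
        obtain ⟨hlt, heq⟩ := inner_eq_wV i hi j
        obtain ⟨hlt', heq'⟩ := inner_eq_wV i' hi' j'
        have hw : PVert.inner i' j' = wV α γ ((j : ℕ) + 1) :=
          heq'.trans (by rw [show (j' : ℕ) = (j : ℕ) + 1 from by omega])
        refine (card_sub heq hw).trans_le ?_
        exact depth_w_w hα H1 H2 H3 (by omega)
      · have hi' : (i' : ℕ) = 0 := by rw [hii']; exact hi
        obtain ⟨hlt, heq⟩ := inner_eq_wV i hi j
        obtain ⟨hlt', heq'⟩ := inner_eq_wV i' hi' j'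
        rw [card_comm]
        have hw : PVert.inner i j = wV α γ ((j' : ℕ) + 1) :=
          heq.trans (by rw [show (j : ℕ) = (j' : ℕ) + 1 from by omega])
        refine (card_sub heq' hw).trans_le ?_
        exact depth_w_w hα H1 H2 H3 (by omega)
    · exfalso
      rcases hr with ⟨hii', hjj'⟩ | ⟨hii', hjj'⟩
      · have hi' : (i' : ℕ) ≠ 0 := by rw [← hii']; exact hi
        have h1 := j.isLt
        have h2 := j'.isLt
        have hz := pa2ℓ_pos (α := α) (γ := γ) hi
        have hz' := pa2ℓ_pos (α := α) (γ := γ) hi'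
        omega
      · have hi' : (i' : ℕ) ≠ 0 := by rw [hii']; exact hi
        have h1 := j.isLt
        have h2 := j'.isLt
        have hz := pa2ℓ_pos (α := α) (γ := γ) hi
        have hz' := pa2ℓ_pos (α := α) (γ := γ) hi'
        omega

end Dispatch
end Stmt6
namespace Stmt6

section Assemble
variable {α γ h : ℕ}

lemma psi'_nonempty (hα : 3 ≤ α) (H1 : 2*h ≤ α - 1) (H3 : 1 ≤ h) :
    ∀ x : Idx γ h, (psi' α γ h x).Nonempty := by
  rintro ((i | i) | ((i | i) | (j | j)))
  · exact ⟨PVert.s, s_mem_Lb⟩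
  · exact ⟨PVert.t, t_mem_Rb⟩
  · exact ⟨PVert.s, s_mem_P⟩
  · exact ⟨PVert.t, t_mem_S⟩
  · exact ⟨wV α γ j.val, (w_mem_M (by have := j.isLt; omega)).mpr ⟨le_rfl, by omega⟩⟩
  · exact ⟨PVert.t, t_mem_W⟩

lemma psi'_connected_all (hα : 3 ≤ α) (hγ : 2 ≤ γ) (H1 : 2*h ≤ α - 1) (H3 : 1 ≤ h) :
    ∀ x : Idx γ h, ((PA2 α γ).induce (psi' α γ h x)).Connected := by
  rintro ((i | i) | ((i | i) | (j | j)))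
  · exact lb_connected hα i.isLt H1
  · exact rb_connected hα i.isLt H1
  · exact p_connected hα H1
  · exact s_connected hα H1 H3
  · exact m_connected hα j.isLt H1
  · exact w_connected hα hγ j.isLt H1

def pvEquiv (k : ℕ) (ℓ : Fin k → ℕ) :
    PVert k ℓ ≃ (Unit ⊕ Unit ⊕ (Σ i : Fin k, Fin (ℓ i - 1))) where
  toFun x := match x with
    | PVert.s => Sum.inl ()
    | PVert.t => Sum.inr (Sum.inl ())
    | PVert.inner i j => Sum.inr (Sum.inr ⟨i, j⟩)
  invFun x := match x with
    | Sum.inl _ => PVert.s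
    | Sum.inr (Sum.inl _) => PVert.t
    | Sum.inr (Sum.inr ⟨i, j⟩) => PVert.inner i j
  left_inv x := by cases x <;> rfl
  right_inv x := by rcases x with _ | (_ | ⟨i, j⟩) <;> rfl

noncomputable instance (k : ℕ) (ℓ : Fin k → ℕ) : Fintype (PVert k ℓ) :=
  Fintype.ofEquiv _ (pvEquiv k ℓ).symm

lemma exists_adj (hα : 3 ≤ α) (hγ : 2 ≤ γ) (y : V α γ) : ∃ z, (PA2 α γ).Adj y z := by
  match y with
  | PVert.s => exact ⟨wV α γ 0, adj_s_w0 hα⟩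
  | PVert.t => exact ⟨bV α γ 0, (adj_b_t (by omega)).symm⟩
  | PVert.inner i j =>
    by_cases hi : (i : ℕ) = 0
    · obtain ⟨hlt, heq⟩ := inner_eq_wV i hi j
      by_cases hj : (j : ℕ) + 1 < α - 1
      · exact ⟨wV α γ ((j : ℕ) + 1), heq ▸ adj_w_succ hj⟩
      · have hja : (j : ℕ) = α - 2 := by omega
        refine ⟨PVert.t, ?_⟩
        have hw : PVert.inner i j = wV α γ (α - 2) := heq.trans (by rw [hja])
        rw [hw]
        exact adj_w_last hα
    · obtain ⟨hiγ, _, heq⟩ := inner_eq_bV i hi j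
      exact ⟨PVert.t, by rw [heq]; exact adj_b_t hiγ⟩

lemma weakDepth_le_k {W : Type*} (k : ℕ) (ψ : Fin k → Set W) (a b : W) :
    weakDepth k ψ a b ≤ k := by
  have : Nat.card {u : Fin k // a ∈ ψ u ∨ b ∈ ψ u} ≤ Nat.card (Fin k) :=
    Nat.card_le_card_of_injective Subtype.val Subtype.val_injective
  simpa [weakDepth] using this

end Assemble
end Stmt6


open Stmt6

/-- For `α ≥ 3` and `γ ≥ 2` there is a clique embedding `ψ : K_k →
P(α, γ×2)` with `k ≥ 3` and `k / wed(ψ) ≥ 2 − 1/(2γ + ⌊(α−1)/2⌋)`; consequently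
`clemb(P(α, γ×2)) ≥ 2 − 1/(2γ + ⌊(α−1)/2⌋)`. -/
theorem stmt_6 (α γ : ℕ) (hα : 3 ≤ α) (hγ : 2 ≤ γ) :
    (∃ (k : ℕ) (ψ : Fin k → Set (PVert (1 + γ) (pa2ℓ α γ))), 3 ≤ k ∧
        IsCliqueEmbedding (PA2 α γ) k ψ ∧
        2 - 1 / ((2 * γ + (α - 1) / 2 : ℕ) : ℝ) ≤ (k : ℝ) / (wed (PA2 α γ) k ψ : ℝ)) ∧
    2 - 1 / ((2 * γ + (α - 1) / 2 : ℕ) : ℝ) ≤ clemb (PA2 α γ) := by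
    classical
  set h : ℕ := (α - 1) / 2 with hh
  have H1 : 2*h ≤ α - 1 := by omega
  have H2 : α - 1 ≤ 2*h + 1 := by omega
  have H3 : 1 ≤ h := by omega
  set K : ℕ := Fintype.card (Idx γ h) with hKdef
  have hKval : K = 4*γ + 2*h - 1 := by
    rw [hKdef, ← Nat.card_eq_fintype_card]
    show Nat.card ((Fin γ ⊕ Fin γ) ⊕ ((Fin γ ⊕ Fin γ) ⊕ (Fin h ⊕ Fin (h - 1)))) = _
    simp [Nat.card_sum]
    omega
  set e : Fin K ≃ Idx γ h := (Fintype.equivFin (Idx γ h)).symm with hedef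
  set ψ : Fin K → Set (V α γ) := fun u => psi' α γ h (e u) with hψ
  have hdepth : ∀ a b : V α γ, weakDepth K ψ a b =
      Nat.card {x : Idx γ h // a ∈ psi' α γ h x ∨ b ∈ psi' α γ h x} := by
    intro a b
    exact Nat.card_congr (Equiv.subtypeEquiv e (fun u => Iff.rfl))
  have hwed_le : wed (PA2 α γ) K ψ ≤ 2*γ + h := by
    apply csSup_le
    · exact ⟨weakDepth K ψ PVert.s (wV α γ 0), PVert.s, wV α γ 0, adj_s_w0 hα, rfl⟩
    · rintro d ⟨a, b, hab, rfl⟩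
      rw [hdepth]
      exact depth_all hα H1 H2 H3 hab
  have hwedset_bdd : BddAbove {d : ℕ | ∃ a b : V α γ, (PA2 α γ).Adj a b ∧
      d = weakDepth K ψ a b} := by
    refine ⟨2*γ + h, ?_⟩
    rintro d ⟨a, b, hab, rfl⟩
    rw [hdepth]
    exact depth_all hα H1 H2 H3 hab
  have hwed_ge : 1 ≤ wed (PA2 α γ) K ψ := by
    have hpos : 1 ≤ weakDepth K ψ PVert.s (wV α γ 0) := by
      rw [hdepth]
      have hne : Nonempty {x : Idx γ h // PVert.s ∈ psi' α γ h x ∨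
          wV α γ 0 ∈ psi' α γ h x} :=
        ⟨⟨Sum.inr (Sum.inl (Sum.inl ⟨0, by omega⟩)), Or.inl s_mem_P⟩⟩
      have := Nat.card_pos (α := {x : Idx γ h // PVert.s ∈ psi' α γ h x ∨
          wV α γ 0 ∈ psi' α γ h x})
      omega
    exact le_trans hpos (le_csSup hwedset_bdd ⟨PVert.s, wV α γ 0, adj_s_w0 hα, rfl⟩)
  have hemb : IsCliqueEmbedding (PA2 α γ) K ψ :=
    ⟨fun u => psi'_nonempty hα H1 H3 (e u),
     fun u => psi'_connected_all hα hγ H1 H3 (e u),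
     fun u v => psi'_touches hα hγ H1 H3 (e u) (e v)⟩
  have hK3 : 3 ≤ K := by omega
  -- real arithmetic
  set W : ℕ := wed (PA2 α γ) K ψ with hWdef
  have hWm : (W : ℝ) ≤ ((2*γ + h : ℕ) : ℝ) := by exact_mod_cast hwed_le
  have hWpos : (0 : ℝ) < (W : ℝ) := by exact_mod_cast hwed_ge
  have hmpos : (0 : ℝ) < ((2*γ + h : ℕ) : ℝ) := by positivity
  have hKcast : (K : ℝ) = 2 * ((2*γ + h : ℕ) : ℝ) - 1 := by
    rw [hKval, Nat.cast_sub (by omega)]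
    push_cast
    ring
  have hmain : 2 - 1 / ((2 * γ + h : ℕ) : ℝ) ≤ (K : ℝ) / (W : ℝ) := by
    have step1 : (K : ℝ) / ((2*γ + h : ℕ) : ℝ) ≤ (K : ℝ) / (W : ℝ) := by
      apply div_le_div_of_nonneg_left _ hWpos hWm
      rw [hKcast]; nlinarith
    refine le_trans (le_of_eq ?_) step1
    rw [hKcast]
    field_simp
  refine ⟨⟨K, ψ, hK3, hemb, hmain⟩, ?_⟩
  -- clemb bound
  have hbdd : BddAbove {x : ℝ | ∃ (k : ℕ) (ψ' : Fin k → Set (V α γ)), 3 ≤ k ∧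
      IsCliqueEmbedding (PA2 α γ) k ψ' ∧ x = (k : ℝ) / (wed (PA2 α γ) k ψ' : ℝ)} := by
    refine ⟨(Fintype.card (V α γ) : ℝ), ?_⟩
    rintro x ⟨k', ψ', hk3, hemb', rfl⟩
    by_cases hW0 : wed (PA2 α γ) k' ψ' = 0
    · rw [hW0]
      simp
    · have hWpos' : 0 < wed (PA2 α γ) k' ψ' := Nat.pos_of_ne_zero hW0
      have hclaim : k' ≤ Fintype.card (V α γ) * wed (PA2 α γ) k' ψ' := by
        set f : Fin k' → V α γ := fun u => (hemb'.nonempty u).choose with hf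
        have hfmem : ∀ u, f u ∈ ψ' u := fun u => (hemb'.nonempty u).choose_spec
        have fiber_le : ∀ y : V α γ,
            (Finset.univ.filter (fun u => f u = y)).card ≤ wed (PA2 α γ) k' ψ' := by
          intro y
          obtain ⟨z, hz⟩ := exists_adj hα hγ y
          have h1 : (Finset.univ.filter (fun u => f u = y)).card =
              Nat.card {u : Fin k' // f u = y} := by
            rw [Nat.card_eq_fintype_card, Fintype.card_subtype]
          have h2 : Nat.card {u : Fin k' // f u = y} ≤ weakDepth k' ψ' y z :=
            Nat.card_le_card_of_injective
              (fun u => ⟨u.1, Or.inl (by have hm := hfmem u.1; rwa [u.2] at hm)⟩)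
              (fun a b hab => Subtype.ext (Subtype.mk_eq_mk.mp hab))
          have h3 : weakDepth k' ψ' y z ≤ wed (PA2 α γ) k' ψ' := by
            apply le_csSup
            · exact ⟨k', by rintro d ⟨a, b, hab, rfl⟩; exact weakDepth_le_k k' ψ' a b⟩
            · exact ⟨y, z, hz, rfl⟩
          omega
        calc k' = (Finset.univ : Finset (Fin k')).card := by simp
          _ = ∑ y : V α γ, (Finset.univ.filter (fun u => f u = y)).card :=
              Finset.card_eq_sum_card_fiberwise (fun x _ => Finset.mem_univ _)
          _ ≤ Fintype.card (V α γ) * wed (PA2 α γ) k' ψ' := by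
              have hs := Finset.sum_le_card_nsmul Finset.univ
                (fun y => (Finset.univ.filter (fun u => f u = y)).card)
                (wed (PA2 α γ) k' ψ') (fun y _ => fiber_le y)
              simpa [smul_eq_mul, Finset.card_univ] using hs
      rw [div_le_iff₀ (by exact_mod_cast hWpos')]
      exact_mod_cast hclaim
  refine le_trans hmain (le_csSup hbdd ?_)
  exact ⟨K, ψ, hK3, hemb, rfl⟩
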